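/- Let c₅ ∈ ℝ and let u, v : ℝ → ℝ be differentiable functions satisfying u′(t) = v(t) − u(t)² + c₅ and v′(t) = −u(t) for all t. Then the function t ↦ H(u(t), v(t)) is constant, where H(u,v) = e^{−2v}(u² − v − 1/2 − c₅). In other words, H is a first integral of the unperturbed blow-up system. -/

import Mathlib

open Real

/-- Hamiltonian of the unperturbed blow-up system. -/
noncomputable def Ham (c₅ u v : ℝ) : ℝ :=
  Real.exp (-2 * v) * (u ^ 2 - v - 1 / 2 - c₅)

/-- `H` is a first integral of the unperturbed blow-up system
`u̇ = v − u² + c₅`, `v̇ = −u`. -/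
theorem ham_first_integral (c₅ : ℝ) (u v : ℝ → ℝ)
    (hu : ∀ t, HasDerivAt u (v t - u t ^ 2 + c₅) t)
    (hv : ∀ t, HasDerivAt v (-u t) t) :
    ∀ s t : ℝ, Ham c₅ (u s) (v s) = Ham c₅ (u t) (v t) := by
  have key : ∀ t, HasDerivAt (fun t => Ham c₅ (u t) (v t)) 0 t := by
    intro t
    have h1 : HasDerivAt (fun t => Real.exp (-2 * v t))
        (Real.exp (-2 * v t) * (-2 * -u t)) t :=
      (((hv t).const_mul (-2 : ℝ)).exp)
    have h2 : HasDerivAt (fun t => u t ^ 2 - v t - 1 / 2 - c₅)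
        (2 * u t * (v t - u t ^ 2 + c₅) - (-u t)) t := by
      have := (hu t).pow 2
      simpa using (((this.sub (hv t)).sub_const (1/2)).sub_const c₅)
    have : HasDerivAt (fun t => Ham c₅ (u t) (v t))
        (Real.exp (-2 * v t) * (-2 * -u t) * (u t ^ 2 - v t - 1 / 2 - c₅) +
          Real.exp (-2 * v t) * (2 * u t * (v t - u t ^ 2 + c₅) - -u t)) t := h1.mul h2
    convert this using 1
    ring
  intro s t
  exact is_const_of_deriv_eq_zero (fun x => (key x).differentiableAt)
    (fun x => (key x).deriv) s t
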